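/- Fix i₀ ∈ [n], and fix δ ∈ ℝ^d, all dual variables other than μ_{i₀}, and all penalty parameters. Then the map μ_{i₀} ↦ L(δ, Λ, μ, P, p) is differentiable at every μ_{i₀} ∈ ℝ, with partial derivative ∂L/∂μ_{i₀} = ξ(δ, μ_{i₀}, ϱ_{i₀}) = max{y·f(x_{i₀}+δ) − c, −μ_{i₀}/ϱ_{i₀}}. -/

import Mathlib

open scoped BigOperators

open Filter

open Filter

lemma mulabs_deriv (t : ℝ) : HasDerivAt (fun x : ℝ => x * |x|) (2 * |t|) t := by
  rcases lt_trichotomy t 0 with ht | ht | ht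
  · have h : HasDerivAt (fun x : ℝ => -(x ^ 2)) (2 * |t|) t := by
      have h2 := (hasDerivAt_pow 2 t).neg
      refine h2.congr_deriv ?_
      rw [abs_of_neg ht]; push_cast; ring
    refine h.congr_of_eventuallyEq ?_
    filter_upwards [eventually_lt_nhds ht] with z hz
    rw [abs_of_neg hz]; ring
  · subst ht
    rw [hasDerivAt_iff_tendsto_slope]
    have habs : Tendsto (fun z : ℝ => |z|) (nhdsWithin 0 {(0:ℝ)}ᶜ) (nhds (2 * |(0:ℝ)|)) := by
      rw [abs_zero, mul_zero]
      exact (continuous_abs.tendsto' 0 0 abs_zero).mono_left nhdsWithin_le_nhds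
    refine habs.congr' ?_
    filter_upwards [self_mem_nhdsWithin] with z hz
    have hz' : z ≠ 0 := hz
    rw [slope_def_field, abs_zero, mul_zero, sub_zero, sub_zero, mul_div_cancel_left₀ _ hz']
  · have h : HasDerivAt (fun x : ℝ => x ^ 2) (2 * |t|) t := by
      have h2 := hasDerivAt_pow 2 t
      refine h2.congr_deriv ?_
      rw [abs_of_pos ht]; push_cast; ring
    refine h.congr_of_eventuallyEq ?_
    filter_upwards [eventually_gt_nhds ht] with z hz
    rw [abs_of_pos hz]; ring

lemma sqmax_deriv (t : ℝ) : HasDerivAt (fun x : ℝ => (max x 0) ^ 2) (2 * max t 0) t := by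
  have hfun : (fun x : ℝ => (max x 0) ^ 2) = fun x => (x ^ 2 + x * |x|) / 2 := by
    funext z
    rcases le_total z 0 with hz | hz
    · rw [max_eq_right hz, abs_of_nonpos hz]; ring
    · rw [max_eq_left hz, abs_of_nonneg hz]; ring
  rw [hfun]
  have h := ((hasDerivAt_pow 2 t).add (mulabs_deriv t)).div_const 2
  refine h.congr_deriv ?_
  rcases le_total t 0 with hz | hz
  · rw [max_eq_right hz, abs_of_nonpos hz]; push_cast; ring
  · rw [max_eq_left hz, abs_of_nonneg hz]; push_cast; ring

lemma key_deriv (a ϱ : ℝ) (hϱ : 0 < ϱ) (t : ℝ) :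
    HasDerivAt (fun s : ℝ => s * max a (-s / ϱ) + ϱ / 2 * (max a (-s / ϱ)) ^ 2)
      (max a (-t / ϱ)) t := by
  have hne : ϱ ≠ 0 := hϱ.ne'
  have hu : ∀ s : ℝ, max a (-s / ϱ) = max (a + s / ϱ) 0 - s / ϱ := by
    intro s
    rcases le_total a (-s / ϱ) with h | h
    · rw [neg_div] at h
      rw [max_eq_right (by rw [neg_div]; exact h), max_eq_right (by linarith : a + s/ϱ ≤ 0),
        neg_div]
      ring
    · rw [neg_div] at h
      rw [max_eq_left (by rw [neg_div]; exact h), max_eq_left (by linarith : (0:ℝ) ≤ a + s/ϱ)]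
      ring
  have hfun : (fun s : ℝ => s * max a (-s / ϱ) + ϱ / 2 * (max a (-s / ϱ)) ^ 2)
      = fun s => ϱ / 2 * (max (a + s / ϱ) 0) ^ 2 - s ^ 2 / (2 * ϱ) := by
    funext s
    rw [hu s]
    field_simp
    ring
  rw [hfun]
  have hinner : HasDerivAt (fun s : ℝ => a + s / ϱ) (1 / ϱ) t := by
    simpa using ((hasDerivAt_id t).div_const ϱ).const_add a
  have h1 : HasDerivAt (fun s : ℝ => (max (a + s / ϱ) 0) ^ 2)
      (2 * max (a + t / ϱ) 0 * (1 / ϱ)) t :=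
    by have h := HasDerivAt.comp t (sqmax_deriv (a + t / ϱ)) hinner; exact h
  have h2 := ((h1.const_mul (ϱ / 2)).sub ((hasDerivAt_pow 2 t).div_const (2 * ϱ)))
  refine h2.congr_deriv ?_
  rw [hu t]; push_cast; field_simp

/-- Dual gradient of the universal augmented Lagrangian with respect to a single dual
variable `μ_{i₀}`: fixing `δ`, all other dual variables, and all penalty parameters, the map
`μ_{i₀} ↦ L(δ, Λ, μ, P, p)` is differentiable at every point `t ∈ ℝ` with derivative
`ξ(δ, t, ϱ_{i₀}) = max{y·f(x_{i₀}+δ) − c, −t/ϱ_{i₀}}`. -/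
theorem stmt_2 {d n q : ℕ}
    (x : Fin n → EuclideanSpace ℝ (Fin d)) (y : ℝ) (hy : y = 1 ∨ y = -1)
    (f : EuclideanSpace ℝ (Fin d) → ℝ)
    (g : Fin q → EuclideanSpace ℝ (Fin d) → ℝ)
    (b : Fin q → ℝ) (c : ℝ)
    (δ : EuclideanSpace ℝ (Fin d))
    (Λ : Fin n → Fin q → ℝ) (μ : Fin n → ℝ)
    (P : Fin n → Fin q → ℝ) (hP : ∀ i j, 0 < P i j)
    (p : Fin n → ℝ) (hp : ∀ i, 0 < p i)
    (L : (Fin n → ℝ) → ℝ)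
    (hL : ∀ μ' : Fin n → ℝ,
      L μ' = (1 / 2) * ‖δ‖ ^ 2
        + ∑ i, ∑ j, Λ i j * max (g j (x i + δ) - b j) (-Λ i j / P i j)
        + ∑ i, μ' i * max (y * f (x i + δ) - c) (-μ' i / p i)
        + (1 / 2) * ∑ i, ∑ j, P i j * (max (g j (x i + δ) - b j) (-Λ i j / P i j)) ^ 2
        + (1 / 2) * ∑ i, p i * (max (y * f (x i + δ) - c) (-μ' i / p i)) ^ 2)
    (i₀ : Fin n) :
    ∀ t : ℝ, HasDerivAt
      (fun s : ℝ => L (Function.update μ i₀ s))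
      (max (y * f (x i₀ + δ) - c) (-t / p i₀)) t := by
  intro t
  set a : ℝ := y * f (x i₀ + δ) - c with ha
  set C : ℝ := (1 / 2) * ‖δ‖ ^ 2
      + ∑ i, ∑ j, Λ i j * max (g j (x i + δ) - b j) (-Λ i j / P i j)
      + ∑ i ∈ Finset.univ.erase i₀, μ i * max (y * f (x i + δ) - c) (-μ i / p i)
      + (1 / 2) * ∑ i, ∑ j, P i j * (max (g j (x i + δ) - b j) (-Λ i j / P i j)) ^ 2
      + (1 / 2) * ∑ i ∈ Finset.univ.erase i₀,
          p i * (max (y * f (x i + δ) - c) (-μ i / p i)) ^ 2 with hC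
  have key := key_deriv a (p i₀) (hp i₀) t
  have heq : ∀ s : ℝ, L (Function.update μ i₀ s)
      = (s * max a (-s / p i₀) + p i₀ / 2 * (max a (-s / p i₀)) ^ 2) + C := by
    intro s
    rw [hL]
    have h3 : ∑ i, Function.update μ i₀ s i
          * max (y * f (x i + δ) - c) (-Function.update μ i₀ s i / p i)
        = s * max a (-s / p i₀)
          + ∑ i ∈ Finset.univ.erase i₀,
              μ i * max (y * f (x i + δ) - c) (-μ i / p i) := by
      rw [← Finset.add_sum_erase _ _ (Finset.mem_univ i₀)]
      congr 1
      · rw [Function.update_self]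
      · exact Finset.sum_congr rfl fun i hi => by
          rw [Function.update_of_ne (Finset.ne_of_mem_erase hi)]
    have h5 : ∑ i, p i
          * (max (y * f (x i + δ) - c) (-Function.update μ i₀ s i / p i)) ^ 2
        = p i₀ * (max a (-s / p i₀)) ^ 2
          + ∑ i ∈ Finset.univ.erase i₀,
              p i * (max (y * f (x i + δ) - c) (-μ i / p i)) ^ 2 := by
      rw [← Finset.add_sum_erase _ _ (Finset.mem_univ i₀)]
      congr 1
      · rw [Function.update_self]
      · exact Finset.sum_congr rfl fun i hi => by
          rw [Function.update_of_ne (Finset.ne_of_mem_erase hi)]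
    rw [h3, h5, hC]
    ring
  exact (key.add_const C).congr_of_eventuallyEq (Filter.Eventually.of_forall heq) |>.congr_deriv rfl
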